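/- Let f be a transcendental entire function, let R > 0 be such that M(r) > r for all r ≥ R, let 0 < ε < 1 and put m = 1/ε. Then f is ε-regular if and only if there exists a sequence (r_n)_{n≥0} of positive reals such that r_n ≥ M^n(R) and M(r_n) ≥ r_{n+1}^m for all n ≥ 0. -/

import Mathlib

open Set Filter

/-- The maximum modulus of `f` on the circle of radius `r`. -/
noncomputable def maxMod (f : ℂ → ℂ) (r : ℝ) : ℝ :=
  sSup ((fun z => ‖f z‖) '' {z : ℂ | ‖z‖ = r})

/-- The minimum modulus of `f` on the circle of radius `r`. -/
noncomputable def minMod (f : ℂ → ℂ) (r : ℝ) : ℝ :=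
  sInf ((fun z => ‖f z‖) '' {z : ℂ | ‖z‖ = r})

/-- `f` is a transcendental entire function: entire and not a polynomial. -/
def TranscendentalEntire (f : ℂ → ℂ) : Prop :=
  Differentiable ℂ f ∧ ¬ ∃ p : Polynomial ℂ, ∀ z, f z = p.eval z

/-- `μ_ε(r) = M(r)^ε`. -/
noncomputable def muEps (f : ℂ → ℂ) (ε : ℝ) (r : ℝ) : ℝ := (maxMod f r) ^ ε

/-- The fast escaping set `A(f)`. -/
def fastEscaping (f : ℂ → ℂ) : Set ℂ :=
  {z : ℂ | ∀ R : ℝ, 0 < R → (∀ r ≥ R, r < maxMod f r) →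
    ∃ ℓ : ℕ, ∀ n : ℕ, (maxMod f)^[n] R ≤ ‖f^[n + ℓ] z‖}

/-- The set `Q_ε(f)`. -/
def Qeps (f : ℂ → ℂ) (ε : ℝ) : Set ℂ :=
  {z : ℂ | ∀ R : ℝ, 0 < R → (∀ r ≥ R, r < muEps f ε r) →
    ∃ ℓ : ℕ, ∀ n : ℕ, (muEps f ε)^[n] R ≤ ‖f^[n + ℓ] z‖}

/-- The quite fast escaping set `Q(f) = ⋃_{0<ε<1} Q_ε(f)`. -/
def Qset (f : ℂ → ℂ) : Set ℂ := ⋃ ε ∈ Ioo (0:ℝ) 1, Qeps f ε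

/-- `f` is `ε`-regular. -/
def epsRegular (f : ℂ → ℂ) (ε : ℝ) : Prop :=
  ∀ R : ℝ, 0 < R → (∀ r ≥ R, r < maxMod f r) →
    ∃ r : ℝ, 0 < r ∧ ∀ n : ℕ, (maxMod f)^[n] R ≤ (muEps f ε)^[n] r

/-- `f` is weakly regular: `ε`-regular for every `ε ∈ (0,1)`. -/
def weaklyRegular (f : ℂ → ℂ) : Prop := ∀ ε ∈ Ioo (0:ℝ) 1, epsRegular f ε

/-- `f` is log-regular (characterization from Corollary 4.3). -/
def logRegular (f : ℂ → ℂ) : Prop :=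
  ∃ r₁ > (1:ℝ), ∃ k > (1:ℝ), ∃ d > (1:ℝ), ∀ r ≥ r₁,
    (maxMod f r) ^ (k * d) ≤ maxMod f (r ^ k)

lemma sphere_eq (r : ℝ) : {z : ℂ | ‖z‖ = r} = Metric.sphere 0 r := by
  ext z; simp [Complex.norm_def]

lemma maxMod_nonneg (f : ℂ → ℂ) (r : ℝ) : 0 ≤ maxMod f r := by
  apply Real.sSup_nonneg
  rintro x ⟨z, -, rfl⟩; exact norm_nonneg _

lemma maxMod_bdd (f : ℂ → ℂ) (hf : Continuous f) (r : ℝ) :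
    BddAbove ((fun z => ‖f z‖) '' {z : ℂ | ‖z‖ = r}) := by
  rw [sphere_eq]
  exact (isCompact_sphere 0 r).bddAbove_image ((continuous_norm.comp hf).continuousOn)

lemma le_maxMod (f : ℂ → ℂ) (hf : Continuous f) {z : ℂ} {r : ℝ} (hz : ‖z‖ = r) :
    ‖f z‖ ≤ maxMod f r :=
  le_csSup (maxMod_bdd f hf r) ⟨z, hz, rfl⟩

lemma sphere_nonempty' {r : ℝ} (hr : 0 ≤ r) : ({z : ℂ | ‖z‖ = r}).Nonempty :=
  ⟨(r : ℂ), by simp [abs_of_nonneg hr]⟩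

lemma maxMod_exists (f : ℂ → ℂ) (hf : Continuous f) {r : ℝ} (hr : 0 ≤ r) :
    ∃ z : ℂ, ‖z‖ = r ∧ maxMod f r = ‖f z‖ := by
  obtain ⟨z, hz, hmax⟩ := (isCompact_sphere (0:ℂ) r).exists_isMaxOn
    (by rw [← sphere_eq]; exact sphere_nonempty' hr)
    ((continuous_norm.comp hf).continuousOn)
  rw [← sphere_eq] at hz
  have hmax : ∀ w ∈ {z : ℂ | ‖z‖ = r}, ‖f w‖ ≤ ‖f z‖ := by
    intro w hw; rw [sphere_eq] at hw; exact hmax hw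
  refine ⟨z, hz, le_antisymm (csSup_le ((sphere_nonempty' hr).image _) ?_) (le_maxMod f hf hz)⟩
  rintro x ⟨w, hw, rfl⟩; exact hmax w hw

lemma maxMod_mono (f : ℂ → ℂ) (hf : Differentiable ℂ f) {r s : ℝ} (hr : 0 ≤ r) (hrs : r ≤ s) :
    maxMod f r ≤ maxMod f s := by
  rcases eq_or_lt_of_le (hr.trans hrs) with h | hs
  · have : r = s := le_antisymm hrs (by linarith)
    rw [this]
  apply csSup_le ((sphere_nonempty' hr).image _)
  rintro x ⟨z, hz, rfl⟩
  have hcl : z ∈ closure (Metric.ball (0:ℂ) s) := by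
    rw [closure_ball (0:ℂ) hs.ne']
    simp only [Metric.mem_closedBall, dist_zero_right]
    rw [hz]; exact hrs
  refine Complex.norm_le_of_forall_mem_frontier_norm_le Metric.isBounded_ball
    (hf.diffContOnCl) (fun w hw => ?_) hcl
  rw [frontier_ball (0:ℂ) hs.ne'] at hw
  exact le_maxMod f hf.continuous (by simpa using hw)

theorem stmt_11 (f : ℂ → ℂ) (hf : TranscendentalEntire f) (R : ℝ) (hR : 0 < R)
    (hM : ∀ r ≥ R, r < maxMod f r) (ε : ℝ) (hε : ε ∈ Ioo (0:ℝ) 1) :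
    epsRegular f ε ↔
      ∃ rs : ℕ → ℝ, ∀ n : ℕ,
        (maxMod f)^[n] R ≤ rs n ∧ (rs (n + 1)) ^ (1 / ε) ≤ maxMod f (rs n) := by
  obtain ⟨hε0, hε1⟩ := hε
  have hcont := hf.1.continuous
  set x : ℕ → ℝ := fun n => (maxMod f)^[n] R with hx
  have hxsucc : ∀ n, x (n+1) = maxMod f (x n) := fun n => Function.iterate_succ_apply' _ _ _
  have hxR : ∀ n, R ≤ x n := by
    intro n; induction n with
    | zero => simp [hx]
    | succ n ih => rw [hxsucc]; exact ih.trans (hM _ ih).le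
  have hxpos : ∀ n, 0 < x n := fun n => hR.trans_le (hxR n)
  have hxmono : Monotone x :=
    monotone_nat_of_le_succ (fun n => by rw [hxsucc]; exact (hM _ (hxR n)).le)
  have hunbdd : ∀ C : ℝ, ∃ n, C ≤ x n := by
    intro C
    by_contra h
    push_neg at h
    have hbdd : BddAbove (Set.range x) := ⟨C, by rintro _ ⟨n, rfl⟩; exact (h n).le⟩
    set L := ⨆ n, x n with hL
    have htend : Tendsto x atTop (nhds L) := tendsto_atTop_ciSup hxmono hbdd
    have hRL : R ≤ L := (hxR 0).trans (le_ciSup hbdd 0)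
    have hLpos : 0 < L := hR.trans_le hRL
    obtain ⟨z, hz, hzmax⟩ := maxMod_exists f hcont hLpos.le
    have habs : ∀ n, ‖((x n / L : ℝ) : ℂ) * z‖ = x n := by
      intro n
      rw [norm_mul, Complex.norm_real, Real.norm_eq_abs, hz, abs_of_nonneg (div_nonneg (hxpos n).le hLpos.le),
        div_mul_cancel₀ _ hLpos.ne']
    have hle : ∀ n, ‖f (((x n / L : ℝ) : ℂ) * z)‖ ≤ L := by
      intro n
      calc ‖f (((x n / L : ℝ) : ℂ) * z)‖ ≤ maxMod f (x n) :=
            le_maxMod f hcont (habs n)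
        _ = x (n+1) := (hxsucc n).symm
        _ ≤ L := le_ciSup hbdd (n+1)
    have hwz : Tendsto (fun n => ((x n / L : ℝ) : ℂ) * z) atTop (nhds z) := by
      have h1 : Tendsto (fun n => x n / L) atTop (nhds (L / L)) := htend.div_const L
      rw [div_self hLpos.ne'] at h1
      have h2 : Tendsto (fun n => ((x n / L : ℝ) : ℂ)) atTop (nhds (1 : ℂ)) :=
        (Complex.continuous_ofReal.tendsto 1).comp h1
      simpa using h2.mul_const z
    have htw : Tendsto (fun n => ‖f (((x n / L : ℝ) : ℂ) * z)‖) atTop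
        (nhds (‖f z‖)) :=
      ((continuous_norm.comp hcont).tendsto z).comp hwz
    have : maxMod f L ≤ L := hzmax ▸ le_of_tendsto htw (Filter.Eventually.of_forall hle)
    exact absurd (hM L hRL) (not_lt.mpr this)
  constructor
  · intro hreg
    obtain ⟨r, hrpos, hrn⟩ := hreg R hR hM
    refine ⟨fun n => (muEps f ε)^[n] r, fun n => ⟨hrn n, ?_⟩⟩
    simp only []
    rw [Function.iterate_succ_apply']
    set y := (muEps f ε)^[n] r
    have h0 : 0 ≤ maxMod f y := maxMod_nonneg f y
    show (maxMod f y ^ ε) ^ (1/ε) ≤ maxMod f y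
    rw [← Real.rpow_mul h0, mul_one_div_cancel hε0.ne', Real.rpow_one]
  · rintro ⟨rs, hrs⟩
    intro R' hR' hM'
    have hrsge : ∀ n, x n ≤ rs n := fun n => (hrs n).1
    have hrspos : ∀ n, 0 < rs n := fun n => (hxpos n).trans_le (hrsge n)
    have hmu : ∀ n, rs (n+1) ≤ muEps f ε (rs n) := by
      intro n
      have h2 := (hrs n).2
      have h3 := Real.rpow_le_rpow (Real.rpow_nonneg (hrspos (n+1)).le _) h2 hε0.le
      rwa [← Real.rpow_mul (hrspos (n+1)).le, one_div_mul_cancel hε0.ne',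
        Real.rpow_one] at h3
    have hmumono : ∀ {a b : ℝ}, 0 ≤ a → a ≤ b → muEps f ε a ≤ muEps f ε b := by
      intro a b ha hab
      exact Real.rpow_le_rpow (maxMod_nonneg f a) (maxMod_mono f hf.1 ha hab) hε0.le
    have hA : ∀ n, rs n ≤ (muEps f ε)^[n] (rs 0) := by
      intro n; induction n with
      | zero => exact le_refl _
      | succ n ih =>
        rw [Function.iterate_succ_apply']
        exact (hmu n).trans (hmumono (hrspos n).le ih)
    obtain ⟨k, hk⟩ := hunbdd R'
    refine ⟨(muEps f ε)^[k] (rs 0), (hrspos k).trans_le (hA k), fun n => ?_⟩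
    have hnn : ∀ m, 0 ≤ (maxMod f)^[m] R' := by
      intro m; cases m with
      | zero => exact hR'.le
      | succ m => rw [Function.iterate_succ_apply']; exact maxMod_nonneg f _
    have h1 : ∀ n, (maxMod f)^[n] R' ≤ (maxMod f)^[n] (x k) := by
      intro n; induction n with
      | zero => exact hk
      | succ n ih =>
        rw [Function.iterate_succ_apply', Function.iterate_succ_apply']
        exact maxMod_mono f hf.1 (hnn n) ih
    have h2 : (maxMod f)^[n] (x k) = x (n + k) := (Function.iterate_add_apply _ n k R).symm
    calc (maxMod f)^[n] R' ≤ x (n + k) := h2 ▸ h1 n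
      _ ≤ rs (n + k) := hrsge _
      _ ≤ (muEps f ε)^[n+k] (rs 0) := hA _
      _ = (muEps f ε)^[n] ((muEps f ε)^[k] (rs 0)) := Function.iterate_add_apply _ n k _
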